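/- Let H be an undirected graph, k ≥ 3, and let G be the directed graph obtained from H by subdividing each edge e = {u,v} into w_e with arcs (u, w_e), (v, w_e). If an allocation π of vertices of G to k agents achieves total dissatisfaction Σ_{i=1}^{k} δ_π(i) = k·|V(G)| − Σ_{v ∈ V(G)} |succ[v]|, then for each edge e = {u,v} of H, the three vertices u, v, w_e are assigned to three pairwise different agents; hence restricting π to the original vertices yields a proper k-coloring of H. -/

import Mathlib

/-- `u` is dominated by the set `P` of allocated items: some `v ∈ P` equals `u`
or has a directed path to `u`. -/
def Dominated {V : Type*} (A : V → V → Prop) (P : Set V) (u : V) : Prop :=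
  ∃ v ∈ P, Relation.ReflTransGen A v u

/-- Dissatisfaction of an agent receiving the set `P`: the number of vertices not
dominated by `P`. -/
noncomputable def diss {V : Type*} (A : V → V → Prop) (P : Set V) : ℕ :=
  {u : V | ¬ Dominated A P u}.ncard

/-- Satisfaction of an agent receiving the set `P`: the number of vertices
dominated by `P`. -/
noncomputable def sat {V : Type*} (A : V → V → Prop) (P : Set V) : ℕ :=
  {u : V | Dominated A P u}.ncard

/-- The directed graph with arc relation `A` is acyclic. -/
def Acyclic {V : Type*} (A : V → V → Prop) : Prop :=
  ∀ v, ¬ Relation.TransGen A v v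

/-- `P` is an antichain: no vertex of `P` is reachable from another vertex of `P`. -/
def IsAntichainIn {V : Type*} (A : V → V → Prop) (P : Set V) : Prop :=
  ∀ x ∈ P, ∀ y ∈ P, x ≠ y → ¬ Relation.ReflTransGen A x y

/-- The subdivision orientation of an undirected graph `H`. -/
def SubdivArc {V : Type*} (H : SimpleGraph V) :
    (V ⊕ H.edgeSet) → (V ⊕ H.edgeSet) → Prop :=
  fun x y =>
    match x, y with
    | Sum.inl u, Sum.inr e => u ∈ e.val
    | _, _ => False

open Finset

section Aux

open scoped Classical

variable {V : Type*} [Fintype V] [DecidableEq V] (H : SimpleGraph V) [DecidableRel H.Adj]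

lemma subdivArc_elim {x y : V ⊕ H.edgeSet} (h : SubdivArc H x y) :
    ∃ u e, x = Sum.inl u ∧ y = Sum.inr e ∧ u ∈ e.val := by
  cases x with
  | inl u => cases y with
    | inl v => exact absurd h (by simp [SubdivArc])
    | inr e => exact ⟨u, e, rfl, rfl, h⟩
  | inr e => cases y <;> exact absurd h (by simp [SubdivArc])

lemma reach_iff {x y : V ⊕ H.edgeSet} :
    Relation.ReflTransGen (SubdivArc H) x y ↔ x = y ∨ SubdivArc H x y := by
  constructor
  · intro h
    rcases h.cases_head with rfl | ⟨c, hac, hcb⟩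
    · exact Or.inl rfl
    rcases hcb.cases_head with rfl | ⟨d, hcd, _⟩
    · exact Or.inr hac
    obtain ⟨u, e, rfl, rfl, -⟩ := subdivArc_elim H hac
    exact absurd hcd (by simp [SubdivArc])
  · rintro (rfl | h)
    · exact Relation.ReflTransGen.refl
    · exact Relation.ReflTransGen.single h

/-- successor finset -/
noncomputable def succF (v : V ⊕ H.edgeSet) : Finset (V ⊕ H.edgeSet) :=
  Finset.univ.filter (fun u => Relation.ReflTransGen (SubdivArc H) v u)

lemma mem_succF {v u : V ⊕ H.edgeSet} :
    u ∈ succF H v ↔ Relation.ReflTransGen (SubdivArc H) v u := by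
  simp [succF]

lemma self_mem_succF (v : V ⊕ H.edgeSet) : v ∈ succF H v :=
  (mem_succF H).2 Relation.ReflTransGen.refl

lemma succF_inr (e : H.edgeSet) : succF H (Sum.inr e) = {Sum.inr e} := by
  ext u
  simp only [mem_succF, reach_iff, mem_singleton]
  constructor
  · rintro (rfl | h)
    · rfl
    · obtain ⟨_, _, h', -, -⟩ := subdivArc_elim H h; exact absurd h' (by simp)
  · rintro rfl; exact Or.inl rfl

lemma succF_inl (u : V) :
    succF H (Sum.inl u) =
      insert (Sum.inl u) ((Finset.univ.filter (fun e : H.edgeSet => u ∈ e.val)).image Sum.inr) := by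
  ext x
  simp only [mem_succF, reach_iff, mem_insert, mem_image, mem_filter, mem_univ, true_and]
  constructor
  · rintro (rfl | h)
    · exact Or.inl rfl
    · obtain ⟨u', e, hu, rfl, he⟩ := subdivArc_elim H h
      obtain rfl : u' = u := by injection hu.symm
      exact Or.inr ⟨e, he, rfl⟩
  · rintro (rfl | ⟨e, he, rfl⟩)
    · exact Or.inl rfl
    · exact Or.inr he

lemma card_succF_inl (u : V) :
    (succF H (Sum.inl u)).card =
      1 + (Finset.univ.filter (fun e : H.edgeSet => u ∈ e.val)).card := by
  rw [succF_inl, card_insert_of_notMem (by simp), Finset.card_image_of_injective _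
    Sum.inr_injective, add_comm]

lemma sum_card_succF :
    ∑ v : V ⊕ H.edgeSet, (succF H v).card ≤ 3 * Fintype.card (V ⊕ H.edgeSet) := by
  rw [Fintype.sum_sum_type]
  have h1 : ∑ e : H.edgeSet, (succF H (Sum.inr e)).card = Fintype.card H.edgeSet := by
    simp [succF_inr]
  have h2 : ∑ u : V, (succF H (Sum.inl u)).card
      = Fintype.card V + ∑ u : V, (Finset.univ.filter (fun e : H.edgeSet => u ∈ e.val)).card := by
    simp [card_succF_inl, Finset.sum_add_distrib, Finset.card_univ]
  have h3 : ∑ u : V, (Finset.univ.filter (fun e : H.edgeSet => u ∈ e.val)).card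
      = 2 * Fintype.card H.edgeSet := by
    have : ∀ u : V, (Finset.univ.filter (fun e : H.edgeSet => u ∈ e.val)).card
        = ∑ e : H.edgeSet, (if u ∈ e.val then 1 else 0) := by
      intro u; rw [Finset.card_filter]
    simp_rw [this]
    rw [Finset.sum_comm]
    have : ∀ e : H.edgeSet, ∑ u : V, (if u ∈ e.val then 1 else 0)
        = (Finset.univ.filter (fun u : V => u ∈ e.val)).card := by
      intro e; rw [Finset.card_filter]
    simp_rw [this]
    have h2card : ∀ e : H.edgeSet, (Finset.univ.filter (fun u : V => u ∈ e.val)).card = 2 := by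
      rintro ⟨e, he⟩
      induction e using Sym2.ind with
      | _ a b =>
        have hab : a ≠ b := (H.mem_edgeSet.mp he).ne
        have : (Finset.univ.filter (fun u : V => u ∈ (s(a, b) : Sym2 V))) = {a, b} := by
          ext u; simp [Sym2.mem_iff]
        rw [this, Finset.card_insert_of_notMem (by simp [hab]), Finset.card_singleton]
    simp [h2card, Finset.card_univ, mul_comm]
  rw [h1, h2, h3, Fintype.card_sum]
  omega

lemma sat_eq_card_biUnion (P : Set (V ⊕ H.edgeSet)) :
    sat (SubdivArc H) P = (P.toFinset.biUnion (succF H)).card := by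
  rw [sat, Set.ncard_eq_toFinset_card']
  congr 1
  ext u
  rw [Set.mem_toFinset]
  simp only [Set.mem_toFinset, Set.mem_setOf_eq, Dominated, Finset.mem_biUnion, mem_succF]

lemma diss_add_sat (A : (V ⊕ H.edgeSet) → (V ⊕ H.edgeSet) → Prop) (P : Set (V ⊕ H.edgeSet)) :
    diss A P + sat A P = Fintype.card (V ⊕ H.edgeSet) := by
  rw [diss, sat, add_comm]
  have h : {u : V ⊕ H.edgeSet | ¬ Dominated A P u} = {u | Dominated A P u}ᶜ := rfl
  rw [h, Set.ncard_add_ncard_compl, Nat.card_eq_fintype_card]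

end Aux

/-- equality in card_biUnion_le forces pairwise disjoint images -/
lemma biUnion_eq_force {α β : Type*} [DecidableEq α] [DecidableEq β] (s : Finset α)
    (f : α → Finset β) (h : (s.biUnion f).card = ∑ v ∈ s, (f v).card) :
    ∀ x ∈ s, ∀ y ∈ s, x ≠ y → Disjoint (f x) (f y) := by
  intro x hx y hy hxy
  by_contra hnd
  have hsub : s.biUnion f = f x ∪ (s.erase x).biUnion f := by
    rw [← Finset.biUnion_insert, Finset.insert_erase hx]
  have hsum : ∑ v ∈ s, (f v).card = (f x).card + ∑ v ∈ s.erase x, (f v).card := by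
    rw [← Finset.sum_erase_add s _ hx, add_comm]
  have hinter : (f x ∩ (s.erase x).biUnion f).Nonempty := by
    obtain ⟨z, hz⟩ := Finset.not_disjoint_iff.1 hnd
    exact ⟨z, Finset.mem_inter.2 ⟨hz.1, Finset.mem_biUnion.2
      ⟨y, Finset.mem_erase.2 ⟨hxy.symm, hy⟩, hz.2⟩⟩⟩
  have hlt : (s.biUnion f).card < ∑ v ∈ s, (f v).card := by
    calc (s.biUnion f).card = (f x ∪ (s.erase x).biUnion f).card := by rw [hsub]
    _ < (f x).card + ((s.erase x).biUnion f).card := by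
        have := Finset.card_union_add_card_inter (f x) ((s.erase x).biUnion f)
        have hpos : 0 < (f x ∩ (s.erase x).biUnion f).card := Finset.card_pos.2 hinter
        omega
    _ ≤ (f x).card + ∑ v ∈ s.erase x, (f v).card := by
        exact Nat.add_le_add_left Finset.card_biUnion_le _
    _ = ∑ v ∈ s, (f v).card := hsum.symm
  omega

lemma ncard_succ {V : Type*} [Fintype V] [DecidableEq V] (H : SimpleGraph V)
    [DecidableRel H.Adj] (v : V ⊕ H.edgeSet) :
    {u : V ⊕ H.edgeSet | Relation.ReflTransGen (SubdivArc H) v u}.ncard = (succF H v).card := by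
  classical
  rw [Set.ncard_eq_toFinset_card', Set.toFinset_setOf, succF]

theorem stmt10 {V : Type*} [Fintype V] [DecidableEq V]
    (H : SimpleGraph V) [DecidableRel H.Adj]
    (k : ℕ) (hk : 3 ≤ k)
    (π : Fin k → Set (V ⊕ H.edgeSet))
    (hdisj : ∀ i j, i ≠ j → Disjoint (π i) (π j))
    (hopt : ∑ i, diss (SubdivArc H) (π i) =
      k * Fintype.card (V ⊕ H.edgeSet) -
        ∑ v : V ⊕ H.edgeSet,
          {u : V ⊕ H.edgeSet | Relation.ReflTransGen (SubdivArc H) v u}.ncard) :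
    (∀ u v (h : H.Adj u v), ∃ i j l : Fin k, i ≠ j ∧ i ≠ l ∧ j ≠ l ∧
      Sum.inl u ∈ π i ∧ Sum.inl v ∈ π j ∧
      (Sum.inr ⟨s(u, v), (H.mem_edgeSet).mpr h⟩ : V ⊕ H.edgeSet) ∈ π l) ∧
    ∃ c : V → Fin k, (∀ u v, H.Adj u v → c u ≠ c v) ∧ ∀ u, Sum.inl u ∈ π (c u) := by
  classical
  set N := Fintype.card (V ⊕ H.edgeSet) with hN
  rw [show (∑ v : V ⊕ H.edgeSet,
      {u : V ⊕ H.edgeSet | Relation.ReflTransGen (SubdivArc H) v u}.ncard)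
      = ∑ v : V ⊕ H.edgeSet, (succF H v).card from Finset.sum_congr rfl
      (fun v _ => ncard_succ H v)] at hopt
  set S := ∑ v : V ⊕ H.edgeSet, (succF H v).card with hSdef
  set bnd : Fin k → ℕ := fun i => ∑ v ∈ (π i).toFinset, (succF H v).card with hbnd
  have hsat_le : ∀ i, sat (SubdivArc H) (π i) ≤ bnd i := fun i => by
    rw [sat_eq_card_biUnion]; exact Finset.card_biUnion_le
  have hpwd : ((Finset.univ : Finset (Fin k)) : Set (Fin k)).PairwiseDisjoint
      (fun i => (π i).toFinset) := by
    intro i _ j _ hij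
    simp only [Function.onFun]
    rw [Finset.disjoint_left]
    intro a h1 h2
    exact Set.disjoint_left.1 (hdisj i j hij) (Set.mem_toFinset.1 h1) (Set.mem_toFinset.1 h2)
  have hsum_bnd : ∑ i, bnd i
      = ∑ v ∈ Finset.univ.biUnion (fun i => (π i).toFinset), (succF H v).card :=
    (Finset.sum_biUnion hpwd).symm
  have hb_le : ∑ i, bnd i ≤ S := by
    rw [hsum_bnd]
    exact Finset.sum_le_sum_of_subset (Finset.subset_univ _)
  have hsum_total : ∑ i, sat (SubdivArc H) (π i) + ∑ i, diss (SubdivArc H) (π i) = k * N := by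
    rw [← Finset.sum_add_distrib]
    have : ∀ i : Fin k, sat (SubdivArc H) (π i) + diss (SubdivArc H) (π i) = N := fun i => by
      rw [add_comm]; exact diss_add_sat H _ _
    simp [this, Finset.sum_const, mul_comm]
  have hSle : S ≤ k * N := le_trans (sum_card_succF H) (Nat.mul_le_mul_right N hk)
  have hsat_eq : ∑ i, sat (SubdivArc H) (π i) = S := by omega
  have hchain : ∑ i, sat (SubdivArc H) (π i) ≤ ∑ i, bnd i :=
    Finset.sum_le_sum (fun i _ => hsat_le i)
  have hbnd_eq : ∑ i, bnd i = S := le_antisymm hb_le (hsat_eq ▸ hchain)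
  have hsat_i : ∀ i, sat (SubdivArc H) (π i) = bnd i := by
    have := (Finset.sum_eq_sum_iff_of_le (fun i (_ : i ∈ Finset.univ) => hsat_le i)).1
      (by rw [hsat_eq, hbnd_eq])
    exact fun i => this i (Finset.mem_univ i)
  have hcover : ∀ x : V ⊕ H.edgeSet, ∃ i, x ∈ π i := by
    intro x
    by_contra hx
    push_neg at hx
    have hxnot : x ∉ Finset.univ.biUnion (fun i => (π i).toFinset) := by
      simp only [Finset.mem_biUnion, Set.mem_toFinset, not_exists]
      intro i ⟨_, h⟩
      exact hx i h
    have hlt : ∑ i, bnd i < S := by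
      rw [hsum_bnd, hSdef]
      exact Finset.sum_lt_sum_of_subset (Finset.subset_univ _) (Finset.mem_univ x) hxnot
        (Finset.card_pos.2 ⟨x, self_mem_succF H x⟩) (fun _ _ _ => Nat.zero_le _)
    omega
  have hdisj_succ : ∀ i, ∀ x ∈ π i, ∀ y ∈ π i, x ≠ y → Disjoint (succF H x) (succF H y) := by
    intro i x hx y hy hxy
    have h := hsat_i i
    rw [sat_eq_card_biUnion] at h
    exact biUnion_eq_force _ _ h x (Set.mem_toFinset.2 hx) y (Set.mem_toFinset.2 hy) hxy
  -- common tool: x,y in same agent with common succ element → contradiction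
  have key : ∀ (i : Fin k) (x y z : V ⊕ H.edgeSet), x ∈ π i → y ∈ π i → x ≠ y →
      z ∈ succF H x → z ∈ succF H y → False := by
    intro i x y z hx hy hxy hzx hzy
    exact Finset.disjoint_left.1 (hdisj_succ i x hx y hy hxy) hzx hzy
  have memsucc : ∀ (u v : V) (h : H.Adj u v),
      (Sum.inr ⟨s(u, v), (H.mem_edgeSet).mpr h⟩ : V ⊕ H.edgeSet)
        ∈ succF H (Sum.inl u) := by
    intro u v h
    exact (mem_succF H).2 (Relation.ReflTransGen.single (by simp [SubdivArc]))
  constructor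
  · intro u v h
    obtain ⟨i, hi⟩ := hcover (Sum.inl u)
    obtain ⟨j, hj⟩ := hcover (Sum.inl v)
    obtain ⟨l, hl⟩ := hcover (Sum.inr ⟨s(u, v), (H.mem_edgeSet).mpr h⟩)
    set E : V ⊕ H.edgeSet := Sum.inr ⟨s(u, v), (H.mem_edgeSet).mpr h⟩ with hE
    have huE : E ∈ succF H (Sum.inl u) := memsucc u v h
    have hvE : E ∈ succF H (Sum.inl v) := by
      have := memsucc v u h.symm
      rwa [show (Sum.inr ⟨s(v, u), (H.mem_edgeSet).mpr h.symm⟩ : V ⊕ H.edgeSet) = E by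
        simp [hE, Sym2.eq_swap]] at this
    have hEE : E ∈ succF H E := self_mem_succF H E
    have huv : (Sum.inl u : V ⊕ H.edgeSet) ≠ Sum.inl v := by
      simp [h.ne]
    refine ⟨i, j, l, ?_, ?_, ?_, hi, hj, hl⟩
    · rintro rfl
      exact key i _ _ E hi hj huv huE hvE
    · rintro rfl
      exact key i _ _ E hi hl (by simp [hE]) huE hEE
    · rintro rfl
      exact key j _ _ E hj hl (by simp [hE]) hvE hEE
  · set c : V → Fin k := fun u => (hcover (Sum.inl u)).choose with hc
    refine ⟨c, ?_, fun u => (hcover (Sum.inl u)).choose_spec⟩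
    intro u v h heq
    have hu : Sum.inl u ∈ π (c u) := (hcover (Sum.inl u)).choose_spec
    have hv : Sum.inl v ∈ π (c v) := (hcover (Sum.inl v)).choose_spec
    rw [heq] at hu
    exact key _ _ _ _ hu hv (by simp [h.ne]) (memsucc u v h)
      (by
        have := memsucc v u h.symm
        rwa [show (Sum.inr ⟨s(v, u), (H.mem_edgeSet).mpr h.symm⟩ : V ⊕ H.edgeSet)
          = Sum.inr ⟨s(u, v), (H.mem_edgeSet).mpr h⟩ by simp [Sym2.eq_swap]] at this)
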